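/- arXiv:2512.24527 — 7 statements merged into one kernel-verified Lean document; each statement's English description precedes it below -/
import Mathlib

section
/- For every point x ∈ ℝ^d and every coordinate j ∈ {1, …, d}, the two-point randomized surrogate of the partial derivative satisfies |∂_j f(x) − E[(f(x + hV) − f(x − hV)) V_j] / (2σ²h)| ≤ (M₂ h / σ²) · E[|V_j| · ‖V‖₂²]. -/
open MeasureTheory

/-- The Euclidean (ℓ₂) norm of a vector of `ℝ^d`. -/
noncomputable def l2norm {d : ℕ} (v : Fin d → ℝ) : ℝ := Real.sqrt (∑ j, (v j) ^ 2)

lemma l2norm_sq {d : ℕ} (v : Fin d → ℝ) : (l2norm v) ^ 2 = ∑ j, (v j) ^ 2 :=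
  Real.sq_sqrt (Finset.sum_nonneg fun k _ => sq_nonneg _)

lemma l2norm_smul_sq {d : ℕ} (h : ℝ) (v : Fin d → ℝ) :
    (l2norm (h • v)) ^ 2 = h ^ 2 * (l2norm v) ^ 2 := by
  rw [l2norm_sq, l2norm_sq, Finset.mul_sum]
  refine Finset.sum_congr rfl fun k _ => ?_
  simp [Pi.smul_apply, smul_eq_mul, mul_pow]

/-- Two-point randomized surrogate of the partial derivative: for every `x ∈ ℝ^d` and
coordinate `j`,
`|∂_j f(x) − E[(f(x+hV) − f(x−hV)) V_j]/(2σ²h)| ≤ (M₂ h/σ²) E[|V_j| ‖V‖₂²]`. -/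
theorem stmt_1 {d : ℕ} {Ω : Type*} [MeasurableSpace Ω] (μ : Measure Ω) [IsProbabilityMeasure μ]
    (f : (Fin d → ℝ) → ℝ) (hdiff : Differentiable ℝ f) (M₂ : ℝ) (hM₂ : 0 < M₂)
    (hHolder : ∀ x y : Fin d → ℝ,
      |f y - f x - fderiv ℝ f x (y - x)| ≤ M₂ * (l2norm (y - x)) ^ 2)
    (V : Ω → (Fin d → ℝ)) (hVmeas : Measurable V)
    (σ : ℝ) (hσ : 0 < σ)
    (hmean : ∀ j, ∫ ω, V ω j ∂μ = 0)
    (horth : ∀ j k, j ≠ k → ∫ ω, V ω j * V ω k ∂μ = 0)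
    (hvar : ∀ j, ∫ ω, (V ω j) ^ 2 ∂μ = σ ^ 2)
    (hint3 : ∀ k, Integrable (fun ω => V ω k) μ)
    (hint4 : ∀ k l, Integrable (fun ω => V ω k * V ω l) μ)
    (h : ℝ) (hh : 0 < h) (x : Fin d → ℝ) (j : Fin d)
    (hint1 : Integrable (fun ω => (f (x + h • V ω) - f (x - h • V ω)) * V ω j) μ)
    (hint2 : Integrable (fun ω => |V ω j| * (l2norm (V ω)) ^ 2) μ) :
    |fderiv ℝ f x (Pi.single j 1) -
        (∫ ω, (f (x + h • V ω) - f (x - h • V ω)) * V ω j ∂μ) / (2 * σ ^ 2 * h)| ≤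
      M₂ * h / σ ^ 2 * ∫ ω, |V ω j| * (l2norm (V ω)) ^ 2 ∂μ := by
  set L := fderiv ℝ f x with hLdef
  set c : Fin d → ℝ := fun k => L (Pi.single k 1) with hc
  have hsingle : ∀ k : Fin d, (fun m => if k = m then (1:ℝ) else 0) = Pi.single k 1 := by
    intro k; funext m; simp [Pi.single_apply, eq_comm]
  have hLv : ∀ v : Fin d → ℝ, L v = ∑ k, c k * v k := by
    intro v
    conv_lhs => rw [pi_eq_sum_univ v]
    rw [map_sum]
    refine Finset.sum_congr rfl fun k _ => ?_
    rw [L.map_smul, hsingle k]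
    simp [hc, mul_comm]
  -- the remainder
  set R : Ω → ℝ := fun ω => (f (x + h • V ω) - f (x - h • V ω)) - 2 * h * L (V ω) with hR
  have hRbound : ∀ ω, |R ω * V ω j| ≤ 2 * M₂ * h ^ 2 * (|V ω j| * (l2norm (V ω)) ^ 2) := by
    intro ω
    set v := V ω
    have h1 := hHolder x (x + h • v)
    have h2 := hHolder x (x - h • v)
    have e1 : (x + h • v) - x = h • v := add_sub_cancel_left x (h • v)
    have e2 : (x - h • v) - x = -(h • v) := by abel
    rw [e1] at h1
    rw [e2] at h2
    have hm : L (-(h • v)) = -(h * L v) := by rw [map_neg, L.map_smul]; simp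
    have hs : L (h • v) = h * L v := by rw [L.map_smul]; simp
    have hn : (l2norm (-(h • v))) ^ 2 = h ^ 2 * (l2norm v) ^ 2 := by
      have : -(h • v) = (-h) • v := by ext k; simp
      rw [this, l2norm_smul_sq]; ring_nf
    rw [hs] at h1
    rw [hm, hn] at h2
    rw [l2norm_smul_sq] at h1
    have hRv : |R ω| ≤ 2 * M₂ * h ^ 2 * (l2norm v) ^ 2 := by
      have : R ω = (f (x + h • v) - f x - h * L v) - (f (x - h • v) - f x - -(h * L v)) := by
        simp only [hR]; ring
      rw [this]
      calc |(f (x + h • v) - f x - h * L v) - (f (x - h • v) - f x - -(h * L v))|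
          ≤ |f (x + h • v) - f x - h * L v| + |f (x - h • v) - f x - -(h * L v)| :=
            abs_sub _ _
        _ ≤ M₂ * (h ^ 2 * (l2norm v) ^ 2) + M₂ * (h ^ 2 * (l2norm v) ^ 2) := add_le_add h1 h2
        _ = 2 * M₂ * h ^ 2 * (l2norm v) ^ 2 := by ring
    rw [abs_mul]
    calc |R ω| * |v j| ≤ (2 * M₂ * h ^ 2 * (l2norm v) ^ 2) * |v j| := by
          apply mul_le_mul_of_nonneg_right hRv (abs_nonneg _)
      _ = 2 * M₂ * h ^ 2 * (|v j| * (l2norm v) ^ 2) := by ring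
  -- integral of L(V)·V_j
  have hLint : Integrable (fun ω => L (V ω) * V ω j) μ := by
    have heq : (fun ω => L (V ω) * V ω j) = fun ω => ∑ k, c k * (V ω k * V ω j) := by
      funext ω; rw [hLv, Finset.sum_mul]
      exact Finset.sum_congr rfl fun k _ => by ring
    rw [heq]
    exact integrable_finset_sum _ fun k _ => (hint4 k j).const_mul _
  have hI : ∫ ω, L (V ω) * V ω j ∂μ = c j * σ ^ 2 := by
    have heq : (fun ω => L (V ω) * V ω j) = fun ω => ∑ k, c k * (V ω k * V ω j) := by
      funext ω; rw [hLv, Finset.sum_mul]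
      exact Finset.sum_congr rfl fun k _ => by ring
    rw [heq, integral_finset_sum _ fun k _ => (hint4 k j).const_mul _]
    have hterm : ∀ k, ∫ ω, c k * (V ω k * V ω j) ∂μ = c k * ∫ ω, V ω k * V ω j ∂μ :=
      fun k => integral_const_mul _ _
    rw [Finset.sum_eq_single j]
    · rw [hterm j]
      have : ∫ ω, V ω j * V ω j ∂μ = σ ^ 2 := by
        rw [← hvar j]
        exact integral_congr_ae (Filter.Eventually.of_forall fun ω => (sq (V ω j)).symm)
      rw [this]
    · intro k _ hk
      rw [hterm k, horth k j hk, mul_zero]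
    · intro hj; exact absurd (Finset.mem_univ j) hj
  have hRint : Integrable (fun ω => R ω * V ω j) μ := by
    have heq : (fun ω => R ω * V ω j) =
        fun ω => (f (x + h • V ω) - f (x - h • V ω)) * V ω j - 2 * h * (L (V ω) * V ω j) := by
      funext ω; simp only [hR]; ring
    rw [heq]
    exact hint1.sub (hLint.const_mul _)
  -- split the integral
  have hsplit : ∫ ω, (f (x + h • V ω) - f (x - h • V ω)) * V ω j ∂μ
      = 2 * h * (c j * σ ^ 2) + ∫ ω, R ω * V ω j ∂μ := by
    have heq : (fun ω => (f (x + h • V ω) - f (x - h • V ω)) * V ω j) =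
        fun ω => 2 * h * (L (V ω) * V ω j) + R ω * V ω j := by
      funext ω; simp only [hR]; ring
    rw [heq, integral_add (hLint.const_mul _) hRint, integral_const_mul, hI]
  set I := ∫ ω, R ω * V ω j ∂μ with hIdef
  set E := ∫ ω, |V ω j| * (l2norm (V ω)) ^ 2 ∂μ with hEdef
  have hE0 : 0 ≤ E := integral_nonneg fun ω => mul_nonneg (abs_nonneg _) (sq_nonneg _)
  have hIb : |I| ≤ 2 * M₂ * h ^ 2 * E := by
    calc |I| ≤ ∫ ω, |R ω * V ω j| ∂μ := by
          simpa only [Real.norm_eq_abs] using norm_integral_le_integral_norm (μ := μ) (fun ω => R ω * V ω j)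
      _ ≤ ∫ ω, 2 * M₂ * h ^ 2 * (|V ω j| * (l2norm (V ω)) ^ 2) ∂μ :=
          integral_mono hRint.abs (hint2.const_mul _) hRbound
      _ = 2 * M₂ * h ^ 2 * E := integral_const_mul _ _
  have hσ2 : (σ:ℝ) ^ 2 ≠ 0 := pow_ne_zero 2 hσ.ne'
  have hh' : h ≠ 0 := hh.ne'
  have key : c j - (2 * h * (c j * σ ^ 2) + I) / (2 * σ ^ 2 * h) = -(I / (2 * σ ^ 2 * h)) := by
    field_simp
    ring
  rw [hsplit, key, abs_neg, abs_div]
  have hden : |2 * σ ^ 2 * h| = 2 * σ ^ 2 * h := by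
    rw [abs_of_pos]; positivity
  rw [hden, div_le_iff₀ (by positivity)]
  calc |I| ≤ 2 * M₂ * h ^ 2 * E := hIb
    _ = M₂ * h / σ ^ 2 * E * (2 * σ ^ 2 * h) := by field_simp
end

section
/- Let w ∈ ℝ^d be defined by w_j := E[|V_j| · ‖V‖₂²]. Then for every real d×d matrix A and every x ∈ ℝ^d, ‖A∇f(x) − A · E[(f(x + hV) − f(x − hV)) V] / (2σ²h)‖₂ ≤ (M₂ h / σ²) · ‖ |A| w ‖₂, and the same inequality holds with the ℓ₁-norm in place of the ℓ₂-norm on both sides, where |A| denotes the matrix of entrywise absolute values of A. -/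
open MeasureTheory

/-- The ℓ₁ norm of a vector of `ℝ^d`. -/
def l1norm {d : ℕ} (v : Fin d → ℝ) : ℝ := ∑ j, |v j|

lemma l2norm_mono {d : ℕ} {u v : Fin d → ℝ} (hb : ∀ j, |u j| ≤ v j) :
    l2norm u ≤ l2norm v := by
  apply Real.sqrt_le_sqrt
  apply Finset.sum_le_sum
  intro j _
  have h1 := hb j
  have h0 : (0:ℝ) ≤ |u j| := abs_nonneg _
  nlinarith [sq_abs (u j)]

lemma l1norm_mono {d : ℕ} {u v : Fin d → ℝ} (hb : ∀ j, |u j| ≤ v j) :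
    l1norm u ≤ l1norm v := by
  apply Finset.sum_le_sum
  intro j _
  exact (hb j).trans (le_abs_self _)

lemma l2norm_const_mul {d : ℕ} (c : ℝ) (v : Fin d → ℝ) :
    l2norm (fun j => c * v j) = |c| * l2norm v := by
  unfold l2norm
  rw [← Real.sqrt_sq_eq_abs, ← Real.sqrt_mul (sq_nonneg c), Finset.mul_sum]
  congr 1
  apply Finset.sum_congr rfl
  intro j _
  ring

lemma l1norm_const_mul {d : ℕ} (c : ℝ) (v : Fin d → ℝ) :
    l1norm (fun j => c * v j) = |c| * l1norm v := by
  unfold l1norm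
  rw [Finset.mul_sum]
  apply Finset.sum_congr rfl
  intro j _
  rw [abs_mul]

/-- Vector bias bound: with `w_j := E[|V_j| ‖V‖₂²]`, for every `d × d` matrix `A` and `x ∈ ℝ^d`,
`‖A∇f(x) − A E[(f(x+hV) − f(x−hV)) V]/(2σ²h)‖₂ ≤ (M₂h/σ²) ‖|A| w‖₂`, and the same with the
ℓ₁ norm on both sides, where `|A|` is the matrix of entrywise absolute values of `A`. -/
theorem stmt_2 {d : ℕ} {Ω : Type*} [MeasurableSpace Ω] (μ : Measure Ω) [IsProbabilityMeasure μ]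
    (f : (Fin d → ℝ) → ℝ) (hdiff : Differentiable ℝ f) (M₂ : ℝ) (hM₂ : 0 < M₂)
    (hHolder : ∀ x y : Fin d → ℝ,
      |f y - f x - fderiv ℝ f x (y - x)| ≤ M₂ * (l2norm (y - x)) ^ 2)
    (V : Ω → (Fin d → ℝ)) (hVmeas : Measurable V)
    (σ : ℝ) (hσ : 0 < σ)
    (hmean : ∀ j, ∫ ω, V ω j ∂μ = 0)
    (horth : ∀ j k, j ≠ k → ∫ ω, V ω j * V ω k ∂μ = 0)
    (hvar : ∀ j, ∫ ω, (V ω j) ^ 2 ∂μ = σ ^ 2)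
    (hint3 : ∀ k, Integrable (fun ω => V ω k) μ)
    (hint4 : ∀ k l, Integrable (fun ω => V ω k * V ω l) μ)
    (h : ℝ) (hh : 0 < h) (x : Fin d → ℝ)
    (hint1 : Integrable (fun ω => (f (x + h • V ω) - f (x - h • V ω)) • V ω) μ)
    (hint2 : ∀ j, Integrable (fun ω => |V ω j| * (l2norm (V ω)) ^ 2) μ)
    (w : Fin d → ℝ) (hw : ∀ j, w j = ∫ ω, |V ω j| * (l2norm (V ω)) ^ 2 ∂μ)
    (A : Matrix (Fin d) (Fin d) ℝ) :
    l2norm (A.mulVec (fun j => fderiv ℝ f x (Pi.single j 1)) -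
          A.mulVec ((1 / (2 * σ ^ 2 * h)) •
            ∫ ω, (f (x + h • V ω) - f (x - h • V ω)) • V ω ∂μ)) ≤
        M₂ * h / σ ^ 2 * l2norm ((A.map (fun a => |a|)).mulVec w) ∧
      l1norm (A.mulVec (fun j => fderiv ℝ f x (Pi.single j 1)) -
          A.mulVec ((1 / (2 * σ ^ 2 * h)) •
            ∫ ω, (f (x + h • V ω) - f (x - h • V ω)) • V ω ∂μ)) ≤
        M₂ * h / σ ^ 2 * l1norm ((A.map (fun a => |a|)).mulVec w) := by
  set L := fderiv ℝ f x with hLdef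
  set I : Fin d → ℝ := ∫ ω, (f (x + h • V ω) - f (x - h • V ω)) • V ω ∂μ with hIdef
  set e : Fin d → ℝ := (fun j => L (Pi.single j 1)) - (1 / (2 * σ ^ 2 * h)) • I with hedef
  -- components of the vector integral
  have hIcomp : ∀ j, I j = ∫ ω, (f (x + h • V ω) - f (x - h • V ω)) * V ω j ∂μ := by
    intro j
    have := (ContinuousLinearMap.proj j : (Fin d → ℝ) →L[ℝ] ℝ).integral_comp_comm hint1
    simp only [ContinuousLinearMap.proj_apply, Pi.smul_apply, smul_eq_mul] at this
    exact this.symm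
  -- l2norm of smul
  have hl2smul : ∀ (c : ℝ) (v : Fin d → ℝ), l2norm (c • v) = |c| * l2norm v := by
    intro c v
    have : (c • v) = fun j => c * v j := by ext j; simp
    rw [this, l2norm_const_mul]
  -- the remainder bound
  set R : Ω → ℝ := fun ω => f (x + h • V ω) - f (x - h • V ω) - 2 * h * L (V ω) with hRdef
  have hRbound : ∀ ω, |R ω| ≤ 2 * M₂ * h ^ 2 * (l2norm (V ω)) ^ 2 := by
    intro ω
    have h1 := hHolder x (x + h • V ω)
    have h2 := hHolder x (x - h • V ω)
    have e1 : x + h • V ω - x = h • V ω := by abel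
    have e2 : x - h • V ω - x = -(h • V ω) := by abel
    rw [e1] at h1
    rw [e2] at h2
    have l2e : l2norm (h • V ω) = h * l2norm (V ω) := by
      rw [hl2smul, abs_of_pos hh]
    have l2e' : l2norm (-(h • V ω)) = h * l2norm (V ω) := by
      have : -(h • V ω) = (-h) • V ω := by simp
      rw [this, hl2smul, abs_neg, abs_of_pos hh]
    rw [l2e] at h1
    rw [l2e', map_neg] at h2
    have hmap : L (h • V ω) = h * L (V ω) := by
      rw [L.map_smul]; simp
    rw [hmap] at h1 h2
    have key : R ω = (f (x + h • V ω) - f x - h * L (V ω)) -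
        (f (x - h • V ω) - f x - -(h * L (V ω))) := by
      simp only [hRdef]; ring
    rw [key]
    calc |(f (x + h • V ω) - f x - h * L (V ω)) -
        (f (x - h • V ω) - f x - -(h * L (V ω)))|
        ≤ |f (x + h • V ω) - f x - h * L (V ω)| +
          |f (x - h • V ω) - f x - -(h * L (V ω))| := abs_sub _ _
      _ ≤ M₂ * (h * l2norm (V ω)) ^ 2 + M₂ * (h * l2norm (V ω)) ^ 2 := add_le_add h1 h2
      _ = 2 * M₂ * h ^ 2 * (l2norm (V ω)) ^ 2 := by ring
  -- L (V ω) as a finite sum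
  have hLV : ∀ ω, L (V ω) = ∑ k, V ω k * L (Pi.single k 1) := by
    intro ω
    conv_lhs => rw [← Finset.univ_sum_single (V ω)]
    rw [map_sum]
    apply Finset.sum_congr rfl
    intro k _
    have hs : (Pi.single k (V ω k) : Fin d → ℝ) = V ω k • (Pi.single k 1 : Fin d → ℝ) := by
      ext i; simp [Pi.single_apply]
    rw [hs, L.map_smul]; simp
  -- integrability of L(V) * V_j
  have hint5 : ∀ j, Integrable (fun ω => L (V ω) * V ω j) μ := by
    intro j
    have heq : (fun ω => L (V ω) * V ω j) =
        fun ω => ∑ k, L (Pi.single k 1) * (V ω k * V ω j) := by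
      ext ω
      rw [hLV ω, Finset.sum_mul]
      apply Finset.sum_congr rfl
      intro k _; ring
    rw [heq]
    exact integrable_finset_sum _ (fun k _ => (hint4 k j).const_mul _)
  -- expectation of L(V) * V_j
  have hELV : ∀ j, ∫ ω, L (V ω) * V ω j ∂μ = σ ^ 2 * L (Pi.single j 1) := by
    intro j
    have heq : ∀ ω, L (V ω) * V ω j = ∑ k, L (Pi.single k 1) * (V ω k * V ω j) := by
      intro ω
      rw [hLV ω, Finset.sum_mul]
      apply Finset.sum_congr rfl
      intro k _; ring
    calc ∫ ω, L (V ω) * V ω j ∂μ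
        = ∫ ω, ∑ k, L (Pi.single k 1) * (V ω k * V ω j) ∂μ := by
          apply integral_congr_ae; filter_upwards with ω; exact heq ω
      _ = ∑ k, ∫ ω, L (Pi.single k 1) * (V ω k * V ω j) ∂μ :=
          integral_finset_sum _ (fun k _ => (hint4 k j).const_mul _)
      _ = ∑ k, L (Pi.single k 1) * ∫ ω, V ω k * V ω j ∂μ := by
          apply Finset.sum_congr rfl
          intro k _
          exact integral_const_mul _ _
      _ = σ ^ 2 * L (Pi.single j 1) := by
          rw [Finset.sum_eq_single j]
          · have : ∫ ω, V ω j * V ω j ∂μ = σ ^ 2 := by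
              rw [← hvar j]
              apply integral_congr_ae; filter_upwards with ω; ring
            rw [this]; ring
          · intro k _ hk
            rw [horth k j hk, mul_zero]
          · intro hj; exact absurd (Finset.mem_univ j) hj
  -- integrability of component of the main integrand
  have hint6 : ∀ j, Integrable (fun ω => (f (x + h • V ω) - f (x - h • V ω)) * V ω j) μ := by
    intro j
    have := (ContinuousLinearMap.proj j : (Fin d → ℝ) →L[ℝ] ℝ).integrable_comp hint1
    simpa using this
  have hRint : ∀ j, Integrable (fun ω => R ω * V ω j) μ := by
    intro j
    have heq : (fun ω => R ω * V ω j) =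
        fun ω => (f (x + h • V ω) - f (x - h • V ω)) * V ω j - 2 * h * (L (V ω) * V ω j) := by
      ext ω; simp only [hRdef]; ring
    rw [heq]
    exact (hint6 j).sub ((hint5 j).const_mul _)
  -- bound on E[R V_j]
  have hEbound : ∀ j, |∫ ω, R ω * V ω j ∂μ| ≤ 2 * M₂ * h ^ 2 * w j := by
    intro j
    have hab : (fun ω => |R ω| * |V ω j|) = fun ω => |R ω * V ω j| := by
      ext ω; rw [abs_mul]
    have h1 : |∫ ω, R ω * V ω j ∂μ| ≤ ∫ ω, |R ω| * |V ω j| ∂μ := by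
      simpa [Real.norm_eq_abs, abs_mul] using
        norm_integral_le_integral_norm (fun ω => R ω * V ω j) (μ := μ)
    have h2 : ∫ ω, |R ω| * |V ω j| ∂μ ≤ ∫ ω, 2 * M₂ * h ^ 2 * (|V ω j| * (l2norm (V ω)) ^ 2) ∂μ := by
      apply integral_mono (by rw [hab]; exact (hRint j).abs) ((hint2 j).const_mul _)
      intro ω
      show |R ω| * |V ω j| ≤ 2 * M₂ * h ^ 2 * (|V ω j| * (l2norm (V ω)) ^ 2)
      have hb := hRbound ω
      have h0 : (0:ℝ) ≤ |V ω j| := abs_nonneg _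
      nlinarith
    have h3 : ∫ ω, 2 * M₂ * h ^ 2 * (|V ω j| * (l2norm (V ω)) ^ 2) ∂μ = 2 * M₂ * h ^ 2 * w j := by
      rw [integral_const_mul, hw j]
    linarith
  -- identity for I j
  have hIj : ∀ j, I j = (∫ ω, R ω * V ω j ∂μ) + 2 * h * σ ^ 2 * L (Pi.single j 1) := by
    intro j
    rw [hIcomp j]
    have heq : ∀ ω, (f (x + h • V ω) - f (x - h • V ω)) * V ω j =
        R ω * V ω j + 2 * h * (L (V ω) * V ω j) := by
      intro ω; simp only [hRdef]; ring
    calc ∫ ω, (f (x + h • V ω) - f (x - h • V ω)) * V ω j ∂μ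
        = ∫ ω, R ω * V ω j + 2 * h * (L (V ω) * V ω j) ∂μ := by
          apply integral_congr_ae; filter_upwards with ω; exact heq ω
      _ = (∫ ω, R ω * V ω j ∂μ) + 2 * h * ∫ ω, L (V ω) * V ω j ∂μ := by
          rw [integral_add (hRint j) ((hint5 j).const_mul _), integral_const_mul]
      _ = (∫ ω, R ω * V ω j ∂μ) + 2 * h * σ ^ 2 * L (Pi.single j 1) := by
          rw [hELV j]; ring
  -- componentwise bound on e
  have hσ2 : (0:ℝ) < σ ^ 2 := by positivity
  have hcomp : ∀ j, |e j| ≤ M₂ * h / σ ^ 2 * w j := by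
    intro j
    have hej : e j = -(1 / (2 * σ ^ 2 * h)) * ∫ ω, R ω * V ω j ∂μ := by
      have : e j = L (Pi.single j 1) - 1 / (2 * σ ^ 2 * h) * I j := by
        simp [hedef]
      rw [this, hIj j]
      field_simp
      ring
    rw [hej, abs_mul]
    have hc : |(-(1 / (2 * σ ^ 2 * h)))| = 1 / (2 * σ ^ 2 * h) := by
      rw [abs_neg, abs_of_pos]
      positivity
    rw [hc]
    calc 1 / (2 * σ ^ 2 * h) * |∫ ω, R ω * V ω j ∂μ|
        ≤ 1 / (2 * σ ^ 2 * h) * (2 * M₂ * h ^ 2 * w j) := by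
          apply mul_le_mul_of_nonneg_left (hEbound j)
          positivity
      _ = M₂ * h / σ ^ 2 * w j := by field_simp
  -- bound on the matrix product components
  have hAe : ∀ j, |(A.mulVec e) j| ≤
      M₂ * h / σ ^ 2 * ((A.map (fun a => |a|)).mulVec w) j := by
    intro j
    simp only [Matrix.mulVec, dotProduct, Matrix.map_apply]
    calc |∑ k, A j k * e k| ≤ ∑ k, |A j k * e k| := Finset.abs_sum_le_sum_abs _ _
      _ ≤ ∑ k, |A j k| * (M₂ * h / σ ^ 2 * w k) := by
          apply Finset.sum_le_sum
          intro k _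
          rw [abs_mul]
          exact mul_le_mul_of_nonneg_left (hcomp k) (abs_nonneg _)
      _ = M₂ * h / σ ^ 2 * ∑ k, |A j k| * w k := by
          rw [Finset.mul_sum]
          apply Finset.sum_congr rfl
          intro k _; ring
  have hsub : A.mulVec (fun j => L (Pi.single j 1)) - A.mulVec ((1 / (2 * σ ^ 2 * h)) • I)
      = A.mulVec e := by
    rw [hedef, Matrix.mulVec_sub]
  have hcoef : (0:ℝ) ≤ M₂ * h / σ ^ 2 := by positivity
  constructor
  · rw [hsub]
    calc l2norm (A.mulVec e)
        ≤ l2norm (fun j => M₂ * h / σ ^ 2 * ((A.map (fun a => |a|)).mulVec w) j) :=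
          l2norm_mono hAe
      _ = M₂ * h / σ ^ 2 * l2norm ((A.map (fun a => |a|)).mulVec w) := by
          rw [l2norm_const_mul, abs_of_nonneg hcoef]
  · rw [hsub]
    calc l1norm (A.mulVec e)
        ≤ l1norm (fun j => M₂ * h / σ ^ 2 * ((A.map (fun a => |a|)).mulVec w) j) :=
          l1norm_mono hAe
      _ = M₂ * h / σ ^ 2 * l1norm ((A.map (fun a => |a|)).mulVec w) := by
          rw [l1norm_const_mul, abs_of_nonneg hcoef]
end

section
/- For every point x ∈ ℝ^d and every coordinate j ∈ {1, …, d}, the one-point randomized surrogate of the partial derivative satisfies |∂_j f(x) − E[f(x + hV) V_j] / (σ²h)| ≤ (M₂ h / σ²) · E[|V_j| · ‖V‖₂²]. -/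
open MeasureTheory

/-- One-point randomized surrogate of the partial derivative: for every `x ∈ ℝ^d` and
coordinate `j`, `|∂_j f(x) − E[f(x+hV) V_j]/(σ²h)| ≤ (M₂ h/σ²) E[|V_j| ‖V‖₂²]`. -/
theorem stmt_3 {d : ℕ} {Ω : Type*} [MeasurableSpace Ω] (μ : Measure Ω) [IsProbabilityMeasure μ]
    (f : (Fin d → ℝ) → ℝ) (hdiff : Differentiable ℝ f) (M₂ : ℝ) (hM₂ : 0 < M₂)
    (hHolder : ∀ x y : Fin d → ℝ,
      |f y - f x - fderiv ℝ f x (y - x)| ≤ M₂ * (l2norm (y - x)) ^ 2)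
    (V : Ω → (Fin d → ℝ)) (hVmeas : Measurable V)
    (σ : ℝ) (hσ : 0 < σ)
    (hmean : ∀ j, ∫ ω, V ω j ∂μ = 0)
    (horth : ∀ j k, j ≠ k → ∫ ω, V ω j * V ω k ∂μ = 0)
    (hvar : ∀ j, ∫ ω, (V ω j) ^ 2 ∂μ = σ ^ 2)
    (hint3 : ∀ k, Integrable (fun ω => V ω k) μ)
    (hint4 : ∀ k l, Integrable (fun ω => V ω k * V ω l) μ)
    (h : ℝ) (hh : 0 < h) (x : Fin d → ℝ) (j : Fin d)
    (hint1 : Integrable (fun ω => f (x + h • V ω) * V ω j) μ)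
    (hint2 : Integrable (fun ω => |V ω j| * (l2norm (V ω)) ^ 2) μ) :
    |fderiv ℝ f x (Pi.single j 1) -
        (∫ ω, f (x + h • V ω) * V ω j ∂μ) / (σ ^ 2 * h)| ≤
      M₂ * h / σ ^ 2 * ∫ ω, |V ω j| * (l2norm (V ω)) ^ 2 ∂μ := by
  set L := fderiv ℝ f x with hLdef
  set g : Fin d → ℝ := fun k => L (Pi.single k 1) with hg
  have hLv : ∀ v : Fin d → ℝ, L v = ∑ k, v k * g k := by
    intro v
    conv_lhs => rw [pi_eq_sum_univ v]
    rw [map_sum]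
    refine Finset.sum_congr rfl fun k _ => ?_
    rw [L.map_smul, smul_eq_mul, hg]
    have hsing : (fun j => if k = j then (1:ℝ) else 0) = Pi.single k 1 := by
      funext i; simp [Pi.single_apply, eq_comm]
    rw [hsing]
  have hLhV : ∀ ω, L (h • V ω) = h * ∑ k, V ω k * g k := by
    intro ω
    rw [L.map_smul, hLv, smul_eq_mul]
  set R : Ω → ℝ := fun ω => f (x + h • V ω) - f x - L (h • V ω) with hR
  have hRbound : ∀ ω, |R ω * V ω j| ≤ M₂ * h ^ 2 * (|V ω j| * (l2norm (V ω)) ^ 2) := by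
    intro ω
    have h1 := hHolder x (x + h • V ω)
    have h2 : (x + h • V ω) - x = h • V ω := by abel
    rw [h2] at h1
    have h3 : (l2norm (h • V ω)) ^ 2 = h ^ 2 * (l2norm (V ω)) ^ 2 := by
      rw [l2norm_sq, l2norm_sq, Finset.mul_sum]
      congr 1; funext k
      simp [mul_pow]
    calc |R ω * V ω j| = |R ω| * |V ω j| := abs_mul _ _
      _ ≤ (M₂ * (h ^ 2 * (l2norm (V ω)) ^ 2)) * |V ω j| := by
          apply mul_le_mul_of_nonneg_right _ (abs_nonneg _)
          rw [← mul_assoc] at *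
          calc |R ω| ≤ M₂ * (l2norm (h • V ω)) ^ 2 := h1
            _ = M₂ * h ^ 2 * (l2norm (V ω)) ^ 2 := by rw [h3]; ring
      _ = M₂ * h ^ 2 * (|V ω j| * (l2norm (V ω)) ^ 2) := by ring
  -- the linear term
  set T : Ω → ℝ := fun ω => ∑ k, (h * g k) * (V ω k * V ω j) with hT
  have hTeq : ∀ ω, L (h • V ω) * V ω j = T ω := by
    intro ω
    rw [hLhV]
    simp only [hT, Finset.mul_sum, Finset.sum_mul]
    exact Finset.sum_congr rfl fun k _ => by ring
  have hTint : Integrable T μ :=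
    integrable_finset_sum _ fun k _ => (hint4 k j).const_mul _
  have hTval : ∫ ω, T ω ∂μ = h * σ ^ 2 * g j := by
    rw [hT, integral_finset_sum _ fun k _ => (hint4 k j).const_mul _]
    have : ∀ k, ∫ ω, (h * g k) * (V ω k * V ω j) ∂μ = (h * g k) * ∫ ω, V ω k * V ω j ∂μ := by
      intro k; exact integral_const_mul _ _
    rw [Finset.sum_congr rfl fun k _ => this k]
    rw [Finset.sum_eq_single j]
    · have : ∫ ω, V ω j * V ω j ∂μ = σ ^ 2 := by
        rw [← hvar j]; congr 1; funext ω; ring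
      rw [this]; ring
    · intro k _ hk
      rw [horth k j hk]; ring
    · intro hj; exact absurd (Finset.mem_univ j) hj
  have hRVint : Integrable (fun ω => R ω * V ω j) μ := by
    have heq : (fun ω => R ω * V ω j) =
        fun ω => f (x + h • V ω) * V ω j - f x * V ω j - T ω := by
      funext ω
      rw [← hTeq ω, hR]; ring
    rw [heq]
    exact (hint1.sub ((hint3 j).const_mul (f x))).sub hTint
  have hIval : ∫ ω, f (x + h • V ω) * V ω j ∂μ =
      (∫ ω, R ω * V ω j ∂μ) + h * σ ^ 2 * g j := by
    have heq : (fun ω => f (x + h • V ω) * V ω j) =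
        fun ω => R ω * V ω j + f x * V ω j + T ω := by
      funext ω; rw [← hTeq ω, hR]; ring
    have h5 : Integrable (fun ω => R ω * V ω j + f x * V ω j) μ :=
      hRVint.add ((hint3 j).const_mul (f x))
    rw [heq, integral_add h5 hTint,
      integral_add hRVint ((hint3 j).const_mul (f x)), integral_const_mul, hmean j, hTval]
    ring
  have hσh : σ ^ 2 * h ≠ 0 := by positivity
  have hkey : g j - (∫ ω, f (x + h • V ω) * V ω j ∂μ) / (σ ^ 2 * h) =
      -(∫ ω, R ω * V ω j ∂μ) / (σ ^ 2 * h) := by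
    rw [hIval]; field_simp; ring
  have habs : |∫ ω, R ω * V ω j ∂μ| ≤ M₂ * h ^ 2 * ∫ ω, |V ω j| * (l2norm (V ω)) ^ 2 ∂μ := by
    calc |∫ ω, R ω * V ω j ∂μ| ≤ ∫ ω, |R ω * V ω j| ∂μ := by
          have := norm_integral_le_integral_norm (μ := μ) (fun ω => R ω * V ω j)
          simp only [Real.norm_eq_abs] at this
          exact this
      _ ≤ ∫ ω, M₂ * h ^ 2 * (|V ω j| * (l2norm (V ω)) ^ 2) ∂μ := by
          exact integral_mono hRVint.abs (hint2.const_mul _) hRbound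
      _ = M₂ * h ^ 2 * ∫ ω, |V ω j| * (l2norm (V ω)) ^ 2 ∂μ := integral_const_mul _ _
  show |g j - (∫ ω, f (x + h • V ω) * V ω j ∂μ) / (σ ^ 2 * h)| ≤ _
  rw [hkey, abs_div, abs_neg]
  have hpos : |σ ^ 2 * h| = σ ^ 2 * h := abs_of_pos (by positivity)
  rw [hpos, div_le_iff₀ (by positivity)]
  calc |∫ ω, R ω * V ω j ∂μ| ≤ M₂ * h ^ 2 * ∫ ω, |V ω j| * (l2norm (V ω)) ^ 2 ∂μ := habs
    _ = M₂ * h / σ ^ 2 * (∫ ω, |V ω j| * (l2norm (V ω)) ^ 2 ∂μ) * (σ ^ 2 * h) := by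
        field_simp
end

section
/- For every fixed real a > 0, the ratio Γ(x + a) / (Γ(x) · x^a) tends to 1 as x → +∞. -/
open Filter Real

private lemma gamma_ratio_upper {a x : ℝ} (ha : 0 < a) (ha1 : a < 1) (hx : 0 < x) :
    Real.Gamma (x + a) ≤ Real.Gamma x * x ^ a := by
  have h := Real.Gamma_mul_add_mul_le_rpow_Gamma_mul_rpow_Gamma hx
    (by linarith : (0:ℝ) < x + 1) (by linarith : (0:ℝ) < 1 - a) ha (by ring)
  rw [show (1 - a) * x + a * (x + 1) = x + a by ring] at h
  have hg := Real.Gamma_pos_of_pos hx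
  calc Real.Gamma (x + a) ≤ Real.Gamma x ^ (1 - a) * Real.Gamma (x + 1) ^ a := h
    _ = Real.Gamma x * x ^ a := by
        rw [Real.Gamma_add_one hx.ne', mul_comm x (Real.Gamma x),
          Real.mul_rpow hg.le hx.le, ← mul_assoc, ← Real.rpow_add hg]
        norm_num

private lemma gamma_ratio_lower {a x : ℝ} (ha : 0 < a) (ha1 : a < 1) (hx : 0 < x) :
    x * Real.Gamma x ≤ Real.Gamma (x + a) * (x + a) ^ (1 - a) := by
  have hxa : (0:ℝ) < x + a := by linarith
  have h := Real.Gamma_mul_add_mul_le_rpow_Gamma_mul_rpow_Gamma hxa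
    (by linarith : (0:ℝ) < x + a + 1) ha (by linarith : (0:ℝ) < 1 - a) (by ring)
  rw [show a * (x + a) + (1 - a) * (x + a + 1) = x + 1 by ring] at h
  have hg := Real.Gamma_pos_of_pos hxa
  rw [Real.Gamma_add_one hx.ne'] at h
  calc x * Real.Gamma x ≤ Real.Gamma (x+a) ^ a * Real.Gamma (x+a+1) ^ (1-a) := h
    _ = Real.Gamma (x + a) * (x + a) ^ (1 - a) := by
        rw [Real.Gamma_add_one hxa.ne', Real.mul_rpow hxa.le hg.le, ← mul_assoc,
          mul_comm (Real.Gamma (x+a) ^ a), mul_assoc, ← Real.rpow_add hg, mul_comm]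
        norm_num

private lemma gamma_ratio_base {a : ℝ} (ha : 0 < a) (ha1 : a < 1) :
    Filter.Tendsto (fun x : ℝ => Real.Gamma (x + a) / (Real.Gamma x * x ^ a))
      Filter.atTop (nhds 1) := by
  have hquot : Tendsto (fun x : ℝ => x / (x + a)) atTop (nhds 1) := by
    have h1 : Tendsto (fun x : ℝ => a / (x + a)) atTop (nhds 0) :=
      Filter.Tendsto.div_atTop tendsto_const_nhds (tendsto_atTop_add_const_right _ a tendsto_id)
    have h2 : Tendsto (fun x : ℝ => 1 - a / (x + a)) atTop (nhds (1 - 0)) :=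
      tendsto_const_nhds.sub h1
    rw [sub_zero] at h2
    apply h2.congr' ?_
    filter_upwards [eventually_gt_atTop 0] with x hx
    have hxa : x + a ≠ 0 := by positivity
    field_simp
    ring
  have hlow : Tendsto (fun x : ℝ => (x / (x + a)) ^ (1 - a)) atTop (nhds 1) := by
    have := (Real.continuousAt_rpow_const 1 (1 - a) (Or.inl one_ne_zero)).tendsto.comp hquot
    simpa [Function.comp_def] using this
  refine tendsto_of_tendsto_of_tendsto_of_le_of_le' hlow tendsto_const_nhds ?_ ?_
  · filter_upwards [eventually_gt_atTop 0] with x hx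
    have hxa : (0:ℝ) < x + a := by linarith
    have hg := Real.Gamma_pos_of_pos hx
    have hxr : (0:ℝ) < x ^ a := Real.rpow_pos_of_pos hx a
    rw [Real.div_rpow hx.le hxa.le, div_le_div_iff₀ (Real.rpow_pos_of_pos hxa _) (by positivity)]
    have key := gamma_ratio_lower ha ha1 hx
    have hxx : x ^ (1 - a) * (Real.Gamma x * x ^ a) = x * Real.Gamma x := by
      rw [mul_comm (Real.Gamma x), ← mul_assoc, ← Real.rpow_add hx]
      norm_num
    rw [hxx]
    linarith [key]
  · filter_upwards [eventually_gt_atTop 0] with x hx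
    have hg := Real.Gamma_pos_of_pos hx
    rw [div_le_one (by positivity)]
    exact gamma_ratio_upper ha ha1 hx

private lemma gamma_ratio_one :
    Filter.Tendsto (fun x : ℝ => Real.Gamma (x + 1) / (Real.Gamma x * x ^ (1:ℝ)))
      Filter.atTop (nhds 1) := by
  apply tendsto_const_nhds.congr' ?_
  filter_upwards [eventually_gt_atTop 0] with x hx
  have hg := Real.Gamma_pos_of_pos hx
  rw [Real.Gamma_add_one hx.ne', Real.rpow_one, mul_comm x (Real.Gamma x),
    div_self (by positivity)]

private lemma gamma_ratio_step {a : ℝ} (ha : 0 < a)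
    (h : Filter.Tendsto (fun x : ℝ => Real.Gamma (x + a) / (Real.Gamma x * x ^ a))
      Filter.atTop (nhds 1)) :
    Filter.Tendsto (fun x : ℝ => Real.Gamma (x + (a + 1)) / (Real.Gamma x * x ^ (a + 1)))
      Filter.atTop (nhds 1) := by
  have hquot : Tendsto (fun x : ℝ => (x + a) / x) atTop (nhds 1) := by
    have h1 : Tendsto (fun x : ℝ => a / x) atTop (nhds 0) :=
      tendsto_const_nhds.div_atTop tendsto_id
    have h2 : Tendsto (fun x : ℝ => 1 + a / x) atTop (nhds (1 + 0)) :=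
      tendsto_const_nhds.add h1
    rw [add_zero] at h2
    apply h2.congr' ?_
    filter_upwards [eventually_gt_atTop 0] with x hx
    field_simp
  have := h.mul hquot
  rw [mul_one] at this
  apply this.congr' ?_
  filter_upwards [eventually_gt_atTop 0] with x hx
  have hg := Real.Gamma_pos_of_pos hx
  have hxa : (0:ℝ) < x + a := by linarith
  have : x + (a + 1) = (x + a) + 1 := by ring
  rw [this, Real.Gamma_add_one hxa.ne', Real.rpow_add hx, Real.rpow_one]
  field_simp

private lemma gamma_ratio_nat (n : ℕ) : ∀ b : ℝ, 0 < b → b ≤ 1 →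
    Filter.Tendsto (fun x : ℝ => Real.Gamma (x + (b + n)) / (Real.Gamma x * x ^ (b + (n:ℝ))))
      Filter.atTop (nhds 1) := by
  induction n with
  | zero =>
    intro b hb hb1
    rcases lt_or_eq_of_le hb1 with h | h
    · simpa using gamma_ratio_base hb h
    · subst h; simpa using gamma_ratio_one
  | succ n ih =>
    intro b hb hb1
    have := gamma_ratio_step (a := b + n) (by positivity) (ih b hb hb1)
    have e : b + ((n:ℝ) + 1) = (b + n) + 1 := by ring
    rw [show ((n+1 : ℕ) : ℝ) = (n:ℝ) + 1 by push_cast; ring, e]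
    exact this

/-- For every fixed real `a > 0`, the ratio `Γ(x+a)/(Γ(x) x^a)` tends to `1` as `x → +∞`. -/
theorem stmt_5 (a : ℝ) (ha : 0 < a) :
    Filter.Tendsto (fun x : ℝ => Real.Gamma (x + a) / (Real.Gamma x * x ^ a))
      Filter.atTop (nhds 1) := by
  set n : ℕ := ⌈a⌉₊ - 1 with hn
  have hceil : 1 ≤ ⌈a⌉₊ := Nat.one_le_ceil_iff.mpr ha
  have hcast : (n : ℝ) = (⌈a⌉₊ : ℝ) - 1 := by
    rw [hn, Nat.cast_sub hceil]; norm_num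
  set b : ℝ := a - n with hb
  have hb0 : 0 < b := by
    have := Nat.ceil_lt_add_one ha.le
    rw [hb, hcast]; linarith
  have hb1 : b ≤ 1 := by
    have := Nat.le_ceil a
    rw [hb, hcast]; linarith
  have hab : a = b + n := by rw [hb]; ring
  rw [hab]
  exact gamma_ratio_nat n b hb0 hb1
end

section
/- Fix p ≥ 1, σ > 0 and q > 0. For each dimension d, let R₀ = R₀(d) be uniformly distributed on (0, ξ(d)) with ξ(d) := √(3σ² · Γ(1/p)Γ((d+2)/p)/(Γ(3/p)Γ(d/p))). Then E[R₀(d)^q] / d^{q/p} converges, as d → +∞, to (3^{q/2} σ^q / ((q + 1) p^{q/p})) · (Γ(1/p)/Γ(3/p))^{q/2}. -/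
open MeasureTheory Real

open Filter in
private lemma aux_gamma_ub {a x : ℝ} (ha0 : 0 ≤ a) (_ha1 : a ≤ 1) (hx : 0 < x) :
    Gamma (x + a) ≤ Gamma x * x ^ a := by
  have hΓx : 0 < Gamma x := Gamma_pos_of_pos hx
  have hΓxa : 0 < Gamma (x + a) := Gamma_pos_of_pos (by linarith)
  have hc := Real.convexOn_log_Gamma.2 (Set.mem_Ioi.2 hx)
    (Set.mem_Ioi.2 (by linarith : (0:ℝ) < x + 1)) (by linarith : (0:ℝ) ≤ 1 - a) ha0 (by ring)
  simp only [smul_eq_mul, Function.comp_apply] at hc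
  have hxa : (1 - a) * x + a * (x + 1) = x + a := by ring
  rw [hxa, Gamma_add_one hx.ne'] at hc
  have hrhs : (1 - a) * log (Gamma x) + a * log (x * Gamma x) = log (Gamma x * x ^ a) := by
    rw [log_mul hx.ne' hΓx.ne', log_mul hΓx.ne' (rpow_pos_of_pos hx a).ne', log_rpow hx]
    ring
  rw [hrhs] at hc
  exact (log_le_log_iff hΓxa (by positivity)).mp hc

open Filter in
private lemma aux_gamma_lb {a x : ℝ} (ha0 : 0 ≤ a) (_ha1 : a ≤ 1) (hx : 0 < x) :
    Gamma x * x ≤ Gamma (x + a) * (x + a) ^ (1 - a) := by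
  have hxa : (0:ℝ) < x + a := by linarith
  have hΓxa : 0 < Gamma (x + a) := Gamma_pos_of_pos hxa
  have hΓx : 0 < Gamma x := Gamma_pos_of_pos hx
  have hc := Real.convexOn_log_Gamma.2 (Set.mem_Ioi.2 hxa)
    (Set.mem_Ioi.2 (by linarith : (0:ℝ) < x + a + 1)) ha0 (by linarith : (0:ℝ) ≤ 1 - a) (by ring)
  simp only [smul_eq_mul, Function.comp_apply] at hc
  have h1 : a * (x + a) + (1 - a) * (x + a + 1) = x + 1 := by ring
  rw [h1, Gamma_add_one hx.ne', Gamma_add_one hxa.ne'] at hc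
  have hrhs : a * log (Gamma (x + a)) + (1 - a) * log ((x + a) * Gamma (x + a))
      = log (Gamma (x + a) * (x + a) ^ (1 - a)) := by
    rw [log_mul hxa.ne' hΓxa.ne', log_mul hΓxa.ne' (rpow_pos_of_pos hxa _).ne', log_rpow hxa]
    ring
  rw [hrhs, mul_comm x (Gamma x)] at hc
  exact (log_le_log_iff (by positivity) (by positivity)).mp hc

/-- The ratio `Γ(x+a)/(Γ(x) x^a)`. -/
noncomputable def Grat (a x : ℝ) : ℝ := Gamma (x + a) / (Gamma x * x ^ a)

open Filter in
private lemma tendsto_Grat {a : ℝ} (ha0 : 0 ≤ a) (ha1 : a ≤ 1) :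
    Tendsto (Grat a) atTop (nhds 1) := by
  have hub : ∀ x : ℝ, 0 < x → Grat a x ≤ 1 := fun x hx =>
    div_le_one_of_le₀ (aux_gamma_ub ha0 ha1 hx) (by positivity)
  have hlb : ∀ x : ℝ, 0 < x → (x / (x + a)) ^ (1 - a) ≤ Grat a x := by
    intro x hx
    have hxa : (0:ℝ) < x + a := by linarith
    have hΓx : 0 < Gamma x := Gamma_pos_of_pos hx
    have h := aux_gamma_lb ha0 ha1 hx
    rw [Grat, le_div_iff₀ (by positivity), div_rpow hx.le hxa.le]
    have hxx : x ^ (1 - a) * x ^ a = x := by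
      rw [← rpow_add hx]; norm_num
    calc x ^ (1 - a) / (x + a) ^ (1 - a) * (Gamma x * x ^ a)
        = Gamma x * (x ^ (1 - a) * x ^ a) / (x + a) ^ (1 - a) := by ring
      _ = Gamma x * x / (x + a) ^ (1 - a) := by rw [hxx]
      _ ≤ Gamma (x + a) := by
          rw [div_le_iff₀ (by positivity)]; exact h
  have h1 : Tendsto (fun x : ℝ => (x / (x + a)) ^ (1 - a)) atTop (nhds 1) := by
    have h2 : Tendsto (fun x : ℝ => x / (x + a)) atTop (nhds 1) := by
      have h3 : Tendsto (fun x : ℝ => 1 - a / (x + a)) atTop (nhds (1 - 0)) :=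
        tendsto_const_nhds.sub (Tendsto.div_atTop tendsto_const_nhds
          (tendsto_atTop_add_const_right atTop a tendsto_id))
      rw [sub_zero] at h3
      refine h3.congr' ?_
      filter_upwards [eventually_gt_atTop 0] with x hx
      have hxa : x + a ≠ 0 := by positivity
      field_simp
      ring
    have := (h2.rpow_const (Or.inr (by linarith : (0:ℝ) ≤ 1 - a)))
    simpa using this
  refine tendsto_of_tendsto_of_tendsto_of_le_of_le' h1 tendsto_const_nhds ?_ ?_
  · filter_upwards [eventually_gt_atTop 0] with x hx using hlb x hx
  · filter_upwards [eventually_gt_atTop 0] with x hx using hub x hx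

open Filter in
private lemma tendsto_Grat2 {a : ℝ} (ha0 : 0 < a) (ha1 : a ≤ 1) :
    Tendsto (Grat (2*a)) atTop (nhds 1) := by
  have h1 := tendsto_Grat ha0.le ha1
  have h2 : Tendsto (fun x : ℝ => Grat a (x + a)) atTop (nhds 1) :=
    h1.comp (tendsto_atTop_add_const_right atTop a tendsto_id)
  have h3 : Tendsto (fun x : ℝ => ((x + a) / x) ^ a) atTop (nhds 1) := by
    have h4 : Tendsto (fun x : ℝ => 1 + a / x) atTop (nhds (1 + 0)) :=
      tendsto_const_nhds.add (tendsto_const_nhds.div_atTop tendsto_id)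
    rw [add_zero] at h4
    have h5 : Tendsto (fun x : ℝ => (x + a) / x) atTop (nhds 1) := by
      refine h4.congr' ?_
      filter_upwards [eventually_gt_atTop 0] with x hx
      field_simp
    simpa using h5.rpow_const (Or.inr ha0.le)
  have h6 := (h2.mul h1).mul h3
  rw [show (1:ℝ) * 1 * 1 = 1 by ring] at h6
  refine h6.congr' ?_
  filter_upwards [eventually_gt_atTop 0] with x hx
  have hxa : (0:ℝ) < x + a := by linarith
  have hΓx : (0:ℝ) < Gamma x := Gamma_pos_of_pos hx
  have hΓxa : (0:ℝ) < Gamma (x + a) := Gamma_pos_of_pos hxa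
  have e1 : x + a + a = x + 2*a := by ring
  have e2 : x ^ a * x ^ a = x ^ (2*a) := by rw [← rpow_add hx]; ring_nf
  have e3 : ((x + a) / x) ^ a = (x + a) ^ a / x ^ a := div_rpow hxa.le hx.le a
  have hxp : (0:ℝ) < x ^ a := rpow_pos_of_pos hx a
  have hxap : (0:ℝ) < (x + a) ^ a := rpow_pos_of_pos hxa a
  simp only [Grat, e1, e3]
  rw [← e2]
  field_simp

/-- Fix `p ≥ 1`, `σ > 0`, `q > 0`. If, for each dimension `d`, `R₀(d)` is uniformly
distributed on `(0, ξ(d))` with `ξ(d) := √(3σ² Γ(1/p)Γ((d+2)/p)/(Γ(3/p)Γ(d/p)))`, then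
`E[R₀(d)^q]/d^{q/p} → (3^{q/2} σ^q/((q+1) p^{q/p})) (Γ(1/p)/Γ(3/p))^{q/2}` as `d → +∞`. -/
theorem stmt_7 {Ω : Type*} [MeasurableSpace Ω] (μ : Measure Ω) [IsProbabilityMeasure μ]
    (p σ q : ℝ) (hp : 1 ≤ p) (hσ : 0 < σ) (hq : 0 < q)
    (ξ : ℕ → ℝ)
    (hξ : ∀ d : ℕ, ξ d = Real.sqrt (3 * σ ^ 2 *
      (Gamma (1 / p) * Gamma (((d : ℝ) + 2) / p)) / (Gamma (3 / p) * Gamma ((d : ℝ) / p))))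
    (R₀ : ℕ → Ω → ℝ) (hmeas : ∀ d, Measurable (R₀ d))
    (hunif : ∀ d : ℕ, 1 ≤ d →
      Measure.map (R₀ d) μ = (ENNReal.ofReal (ξ d))⁻¹ • volume.restrict (Set.Ioo 0 (ξ d))) :
    Filter.Tendsto (fun d : ℕ => (∫ ω, R₀ d ω ^ q ∂μ) / (d : ℝ) ^ (q / p)) Filter.atTop
      (nhds ((3 ^ (q / 2) * σ ^ q / ((q + 1) * p ^ (q / p))) *
        (Gamma (1 / p) / Gamma (3 / p)) ^ (q / 2))) := by
  have hp0 : (0:ℝ) < p := lt_of_lt_of_le one_pos hp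
  set a : ℝ := 1/p with ha
  have ha0 : 0 < a := by positivity
  have ha1 : a ≤ 1 := by rw [ha, div_le_one hp0]; linarith
  have hGd : Filter.Tendsto (fun d : ℕ => Grat (2*a) ((d:ℝ)/p)) Filter.atTop (nhds 1) :=
    (tendsto_Grat2 ha0 ha1).comp (tendsto_natCast_atTop_atTop.atTop_div_const hp0)
  set L := (3 ^ (q / 2) * σ ^ q / ((q + 1) * p ^ (q / p))) *
    (Gamma (1 / p) / Gamma (3 / p)) ^ (q / 2) with hL
  have hmain : Filter.Tendsto (fun d : ℕ => L * Grat (2*a) ((d:ℝ)/p) ^ (q/2))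
      Filter.atTop (nhds (L * 1 ^ (q/2))) :=
    Filter.Tendsto.mul tendsto_const_nhds (hGd.rpow_const (Or.inr (by positivity)))
  rw [one_rpow, mul_one] at hmain
  refine Filter.Tendsto.congr' ?_ hmain
  filter_upwards [Filter.eventually_ge_atTop 1] with d hd
  -- positivity facts
  have hd0 : (0:ℝ) < (d:ℝ) := by exact_mod_cast Nat.lt_of_lt_of_le Nat.zero_lt_one hd
  have hΓ1 : 0 < Gamma (1/p) := Gamma_pos_of_pos (by positivity)
  have hΓ3 : 0 < Gamma (3/p) := Gamma_pos_of_pos (by positivity)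
  have hΓd : 0 < Gamma ((d:ℝ)/p) := Gamma_pos_of_pos (by positivity)
  have hΓd2 : 0 < Gamma (((d:ℝ)+2)/p) := Gamma_pos_of_pos (by positivity)
  have hT : 0 < 3 * σ ^ 2 * (Gamma (1/p) * Gamma (((d:ℝ)+2)/p)) /
      (Gamma (3/p) * Gamma ((d:ℝ)/p)) := by positivity
  have hξpos : 0 < ξ d := by rw [hξ d]; exact Real.sqrt_pos.mpr hT
  have hq1 : (0:ℝ) < q + 1 := by linarith
  -- Step A: the integral
  have hintA : ∫ ω, R₀ d ω ^ q ∂μ = ξ d ^ q / (q + 1) := by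
    have hmeq : ∫ ω, R₀ d ω ^ q ∂μ = ∫ x, x ^ q ∂(Measure.map (R₀ d) μ) :=
      (integral_map (hmeas d).aemeasurable
        ((by fun_prop : Measurable (fun x : ℝ => x ^ q)).aestronglyMeasurable)).symm
    rw [hmeq, hunif d hd, integral_smul_measure, ENNReal.toReal_inv,
      ENNReal.toReal_ofReal hξpos.le, ← integral_Ioc_eq_integral_Ioo,
      ← intervalIntegral.integral_of_le hξpos.le,
      integral_rpow (Or.inl (by linarith : (-1:ℝ) < q)),
      Real.zero_rpow (by linarith : q + 1 ≠ 0), smul_eq_mul,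
      Real.rpow_add hξpos, rpow_one]
    field_simp
    ring
  -- Step B: rewrite ξ d ^ q
  have hGpos : 0 < Grat (2*a) ((d:ℝ)/p) := by
    rw [Grat]
    have : (0:ℝ) < (d:ℝ)/p + 2*a := by positivity
    exact div_pos (Gamma_pos_of_pos this) (by positivity)
  have hdp : (0:ℝ) < (d:ℝ)/p := by positivity
  have hBeq : Gamma (((d:ℝ)+2)/p) / Gamma ((d:ℝ)/p)
      = Grat (2*a) ((d:ℝ)/p) * ((d:ℝ)/p) ^ (2*a) := by
    rw [Grat, show (d:ℝ)/p + 2*a = ((d:ℝ)+2)/p by rw [ha]; ring]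
    have hxp : (0:ℝ) < ((d:ℝ)/p) ^ (2*a) := rpow_pos_of_pos (by positivity) _
    field_simp
  have hTfact : 3 * σ ^ 2 * (Gamma (1/p) * Gamma (((d:ℝ)+2)/p)) /
      (Gamma (3/p) * Gamma ((d:ℝ)/p))
      = (3 * σ ^ 2 * (Gamma (1/p) / Gamma (3/p))) *
        (Gamma (((d:ℝ)+2)/p) / Gamma ((d:ℝ)/p)) := by
    field_simp
  have hσq : (σ ^ 2) ^ (q/2) = σ ^ q := by
    rw [← rpow_natCast σ 2, ← rpow_mul hσ.le]
    congr 1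
    push_cast
    ring
  have hξq : ξ d ^ q
      = (3 ^ (q/2) * σ ^ q * (Gamma (1/p) / Gamma (3/p)) ^ (q/2) / p ^ (q/p)) *
        Grat (2*a) ((d:ℝ)/p) ^ (q/2) * (d:ℝ) ^ (q/p) :=
    calc ξ d ^ q
        = (3 * σ ^ 2 * (Gamma (1/p) * Gamma (((d:ℝ)+2)/p)) /
            (Gamma (3/p) * Gamma ((d:ℝ)/p))) ^ (q/2) := by
          rw [hξ d, sqrt_eq_rpow, ← rpow_mul hT.le, show 1/2*q = q/2 by ring]
      _ = ((3 * σ ^ 2 * (Gamma (1/p) / Gamma (3/p))) *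
            (Gamma (((d:ℝ)+2)/p) / Gamma ((d:ℝ)/p))) ^ (q/2) := by rw [hTfact]
      _ = (3 * σ ^ 2 * (Gamma (1/p) / Gamma (3/p))) ^ (q/2) *
            (Gamma (((d:ℝ)+2)/p) / Gamma ((d:ℝ)/p)) ^ (q/2) :=
          mul_rpow (by positivity) (by positivity)
      _ = (3 ^ (q/2) * (σ ^ 2) ^ (q/2) * (Gamma (1/p) / Gamma (3/p)) ^ (q/2)) *
            (Grat (2*a) ((d:ℝ)/p) ^ (q/2) * (((d:ℝ)/p) ^ (2*a)) ^ (q/2)) := by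
          rw [hBeq, mul_rpow (by positivity) (by positivity),
            mul_rpow (by positivity) (by positivity),
            mul_rpow hGpos.le (by positivity)]
      _ = (3 ^ (q/2) * σ ^ q * (Gamma (1/p) / Gamma (3/p)) ^ (q/2)) *
            (Grat (2*a) ((d:ℝ)/p) ^ (q/2) * ((d:ℝ) ^ (q/p) / p ^ (q/p))) := by
          rw [hσq, ← rpow_mul hdp.le, show 2*a*(q/2) = q/p by rw [ha]; ring,
            div_rpow hd0.le hp0.le]
      _ = (3 ^ (q/2) * σ ^ q * (Gamma (1/p) / Gamma (3/p)) ^ (q/2) / p ^ (q/p)) *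
            Grat (2*a) ((d:ℝ)/p) ^ (q/2) * (d:ℝ) ^ (q/p) := by
          have hpq : (0:ℝ) < p ^ (q/p) := rpow_pos_of_pos hp0 _
          field_simp
  -- final assembly
  have hdq : (0:ℝ) < (d:ℝ) ^ (q/p) := rpow_pos_of_pos hd0 _
  have hGq : (0:ℝ) < Grat (2*a) ((d:ℝ)/p) ^ (q/2) := rpow_pos_of_pos hGpos _
  have hpq : (0:ℝ) < p ^ (q/p) := rpow_pos_of_pos hp0 _
  rw [hintA, hξq, hL]
  field_simp
end

section
/- Let U be a random vector in ℝ^d and R a strictly positive real random variable independent of U. Let p ≥ 1, q > 0 and C, c₀ > 0 be constants, and assume the concentration property: for every L > 0, every function f : ℝ^d → ℝ that is L-Lipschitz with respect to the Euclidean norm, and every t > 0, P(|f(U) − f(0)| ≥ t) ≤ C · exp(−c₀ d t^p / L^p). Then for every L₀-Lipschitz function g : ℝ^d → ℝ with E[R^q] < ∞, E[|g(R·U) − g(0)|^q] ≤ (q C Γ(q/p) / (p c₀^{q/p})) · (L₀^q / d^{q/p}) · E[R^q]. -/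
open MeasureTheory Set

/-- If `U` satisfies the `p`-exponential concentration property for Lipschitz functions and
`R > 0` is independent of `U`, then for every `L₀`-Lipschitz `g` with `E[R^q] < ∞`,
`E[|g(R·U) − g(0)|^q] ≤ (q C Γ(q/p)/(p c₀^{q/p})) (L₀^q/d^{q/p}) E[R^q]`. -/
theorem stmt_9 {Ω : Type*} [MeasurableSpace Ω] (μ : Measure Ω) [IsProbabilityMeasure μ]
    {d : ℕ} (hd : 0 < d)
    (U : Ω → EuclideanSpace ℝ (Fin d)) (R : Ω → ℝ)
    (hUmeas : Measurable U) (hRmeas : Measurable R)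
    (hRpos : ∀ ω, 0 < R ω) (hindep : ProbabilityTheory.IndepFun R U μ)
    (p q C c₀ : ℝ) (hp : 1 ≤ p) (hq : 0 < q) (hC : 0 < C) (hc₀ : 0 < c₀)
    (hconc : ∀ L : ℝ, 0 < L → ∀ f : EuclideanSpace ℝ (Fin d) → ℝ,
      LipschitzWith (Real.toNNReal L) f → ∀ t : ℝ, 0 < t →
        μ {ω | t ≤ |f (U ω) - f 0|} ≤
          ENNReal.ofReal (C * Real.exp (-(c₀ * d * t ^ p) / L ^ p)))
    (L₀ : ℝ) (hL₀ : 0 < L₀)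
    (g : EuclideanSpace ℝ (Fin d) → ℝ) (hg : LipschitzWith (Real.toNNReal L₀) g)
    (hR : Integrable (fun ω => R ω ^ q) μ) :
    ∫ ω, |g (R ω • U ω) - g 0| ^ q ∂μ ≤
      (q * C * Real.Gamma (q / p) / (p * c₀ ^ (q / p))) * (L₀ ^ q / (d : ℝ) ^ (q / p)) *
        ∫ ω, R ω ^ q ∂μ := by
  have hp0 : 0 < p := lt_of_lt_of_le one_pos hp
  have hd0 : (0:ℝ) < d := by exact_mod_cast hd
  set K : ℝ := q * C * Real.Gamma (q / p) / (p * c₀ ^ (q / p)) * (L₀ ^ q / (d : ℝ) ^ (q / p))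
    with hKdef
  have hΓ : 0 < Real.Gamma (q / p) := Real.Gamma_pos_of_pos (div_pos hq hp0)
  have hK0 : 0 ≤ K := by positivity
  have hgc : Continuous g := hg.continuous
  have hφc : Continuous (fun x : ℝ × EuclideanSpace ℝ (Fin d) => |g (x.1 • x.2) - g 0|) :=
    ((hgc.comp (continuous_fst.smul continuous_snd)).sub continuous_const).abs
  have hφm : Measurable
      (fun x : ℝ × EuclideanSpace ℝ (Fin d) => ENNReal.ofReal (|g (x.1 • x.2) - g 0| ^ q)) :=
    ENNReal.measurable_ofReal.comp (hφc.measurable.pow_const q)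
  -- key bound for fixed r > 0
  have key : ∀ r : ℝ, 0 < r →
      ∫⁻ u, ENNReal.ofReal (|g (r • u) - g 0| ^ q) ∂(μ.map U) ≤ ENNReal.ofReal (K * r ^ q) := by
    intro r hr
    have hrL : 0 < r * L₀ := mul_pos hr hL₀
    have hflip : LipschitzWith (Real.toNNReal (r * L₀))
        (fun u : EuclideanSpace ℝ (Fin d) => g (r • u)) := by
      have h2 := hg.comp (lipschitzWith_smul (β := EuclideanSpace ℝ (Fin d)) r)
      have heq : Real.toNNReal L₀ * ‖r‖₊ = Real.toNNReal (r * L₀) := by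
        apply NNReal.coe_injective
        push_cast
        rw [Real.coe_toNNReal _ hL₀.le, Real.coe_toNNReal _ hrL.le, Real.norm_eq_abs,
          abs_of_pos hr]
        ring
      rwa [heq] at h2
    have hfc : Continuous (fun u : EuclideanSpace ℝ (Fin d) => |g (r • u) - g 0|) :=
      by fun_prop
    have tail : ∀ t : ℝ, 0 < t → (μ.map U) {u | t ≤ |g (r • u) - g 0|} ≤
        ENNReal.ofReal (C * Real.exp (-(c₀ * d * t ^ p) / (r * L₀) ^ p)) := by
      intro t ht
      have hset : MeasurableSet {u : EuclideanSpace ℝ (Fin d) | t ≤ |g (r • u) - g 0|} :=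
        measurableSet_le measurable_const hfc.measurable
      rw [Measure.map_apply hUmeas hset]
      have h3 := hconc (r * L₀) hrL (fun u => g (r • u)) hflip t ht
      simpa [smul_zero] using h3
    set b : ℝ := c₀ * d / (r * L₀) ^ p with hbdef
    have hBpos : (0:ℝ) < (r * L₀) ^ p := Real.rpow_pos_of_pos hrL p
    have hb : (0:ℝ) < b := div_pos (mul_pos hc₀ hd0) hBpos
    have hlc := lintegral_rpow_eq_lintegral_meas_le_mul (μ.map U)
      (f := fun u : EuclideanSpace ℝ (Fin d) => |g (r • u) - g 0|)
      (Filter.Eventually.of_forall fun u => abs_nonneg _) hfc.measurable.aemeasurable hq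
    rw [show (∫⁻ u, ENNReal.ofReal (|g (r • u) - g 0| ^ q) ∂(μ.map U)) =
        ENNReal.ofReal q * ∫⁻ t in Ioi 0,
          (μ.map U) {u | t ≤ |g (r • u) - g 0|} * ENNReal.ofReal (t ^ (q - 1)) from hlc]
    set F : ℝ → ℝ := fun t => C * (t ^ (q - 1) * Real.exp (-b * t ^ p)) with hFdef
    have hFint : IntegrableOn F (Ioi 0) :=
      (integrableOn_rpow_mul_exp_neg_mul_rpow (by linarith) hp0 hb).const_mul C
    have hFnn : ∀ t : ℝ, 0 < t → 0 ≤ F t := by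
      intro t ht
      have : 0 ≤ t ^ (q - 1) := Real.rpow_nonneg ht.le _
      positivity
    have hFmeas : Measurable fun t : ℝ => ENNReal.ofReal (F t) := by
      apply ENNReal.measurable_ofReal.comp
      exact (((measurable_id.pow_const (q-1)).mul
        ((((measurable_id.pow_const p)).const_mul (-b)).exp)).const_mul C)
    have hstep2 : ∫⁻ t in Ioi 0,
          (μ.map U) {u | t ≤ |g (r • u) - g 0|} * ENNReal.ofReal (t ^ (q - 1)) ≤
        ∫⁻ t in Ioi 0, ENNReal.ofReal (F t) := by
      apply setLIntegral_mono hFmeas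
      intro t ht
      have htail := tail t ht
      have hFeq : C * Real.exp (-(c₀ * ↑d * t ^ p) / (r * L₀) ^ p) * t ^ (q - 1) = F t := by
        rw [hFdef]
        have harg : -(c₀ * ↑d * t ^ p) / (r * L₀) ^ p = -b * t ^ p := by rw [hbdef]; ring
        rw [harg]; ring
      calc (μ.map U) {u | t ≤ |g (r • u) - g 0|} * ENNReal.ofReal (t ^ (q - 1))
          ≤ ENNReal.ofReal (C * Real.exp (-(c₀ * ↑d * t ^ p) / (r * L₀) ^ p)) *
              ENNReal.ofReal (t ^ (q - 1)) := mul_le_mul_left htail _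
        _ = ENNReal.ofReal (C * Real.exp (-(c₀ * ↑d * t ^ p) / (r * L₀) ^ p) * t ^ (q - 1)) :=
            (ENNReal.ofReal_mul (by positivity)).symm
        _ = ENNReal.ofReal (F t) := by rw [hFeq]
    have hstep3 : ∫⁻ t in Ioi 0, ENNReal.ofReal (F t) = ENNReal.ofReal (∫ t in Ioi 0, F t) := by
      rw [← ofReal_integral_eq_lintegral_ofReal hFint]
      filter_upwards [self_mem_ae_restrict (measurableSet_Ioi : MeasurableSet (Ioi (0:ℝ)))]
        with t ht
      exact hFnn t ht
    have hval : ∫ t in Ioi 0, F t = C * (b ^ (-(q - 1 + 1) / p) * (1 / p) *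
        Real.Gamma ((q - 1 + 1) / p)) := by
      rw [hFdef, MeasureTheory.integral_const_mul,
        integral_rpow_mul_exp_neg_mul_rpow hp0 (by linarith) hb]
    have hqq : q - 1 + 1 = q := by ring
    have h1 : c₀ ^ (q / p) ≠ 0 := by positivity
    have h2 : ((d : ℝ)) ^ (q / p) ≠ 0 := by positivity
    have hbrpow : b ^ (-(q / p)) = r ^ q * L₀ ^ q / (c₀ ^ (q / p) * (d:ℝ) ^ (q / p)) := by
      rw [hbdef, Real.div_rpow (by positivity) hBpos.le, Real.mul_rpow hc₀.le hd0.le,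
        Real.rpow_neg hc₀.le, Real.rpow_neg hd0.le, Real.rpow_neg hBpos.le,
        ← Real.rpow_mul hrL.le, show p * (q / p) = q from by field_simp,
        Real.mul_rpow hr.le hL₀.le]
      have h3 : r ^ q ≠ 0 := by positivity
      have h4 : L₀ ^ q ≠ 0 := by positivity
      field_simp
    have hreal : q * (C * (b ^ (-(q / p)) * (1 / p) * Real.Gamma (q / p))) = K * r ^ q := by
      rw [hbrpow, hKdef]
      field_simp
    calc ENNReal.ofReal q *
          ∫⁻ t in Ioi 0, (μ.map U) {u | t ≤ |g (r • u) - g 0|} * ENNReal.ofReal (t ^ (q - 1))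
        ≤ ENNReal.ofReal q * ENNReal.ofReal (∫ t in Ioi 0, F t) := by
          rw [← hstep3]; exact mul_le_mul_right hstep2 _
      _ = ENNReal.ofReal (q * (C * (b ^ (-(q / p)) * (1 / p) * Real.Gamma (q / p)))) := by
          rw [hval, hqq, neg_div, ← ENNReal.ofReal_mul hq.le]
      _ = ENNReal.ofReal (K * r ^ q) := by rw [hreal]
  -- main argument
  have hUae : AEMeasurable U μ := hUmeas.aemeasurable
  have hRae : AEMeasurable R μ := hRmeas.aemeasurable
  haveI : IsProbabilityMeasure (μ.map U) := Measure.isProbabilityMeasure_map hUae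
  haveI : IsProbabilityMeasure (μ.map R) := Measure.isProbabilityMeasure_map hRae
  have hmap : μ.map (fun ω => (R ω, U ω)) = (μ.map R).prod (μ.map U) :=
    (ProbabilityTheory.indepFun_iff_map_prod_eq_prod_map_map hRae hUae).mp hindep
  have hRq_nonneg : ∀ ω, 0 ≤ R ω ^ q := fun ω => Real.rpow_nonneg (hRpos ω).le q
  have hI : ∫⁻ ω, ENNReal.ofReal (|g (R ω • U ω) - g 0| ^ q) ∂μ
      = ∫⁻ r, ∫⁻ u, ENNReal.ofReal (|g (r • u) - g 0| ^ q) ∂(μ.map U) ∂(μ.map R) := by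
    calc ∫⁻ ω, ENNReal.ofReal (|g (R ω • U ω) - g 0| ^ q) ∂μ
        = ∫⁻ x, ENNReal.ofReal (|g (x.1 • x.2) - g 0| ^ q)
            ∂(μ.map (fun ω => (R ω, U ω))) :=
          (lintegral_map hφm (hRmeas.prodMk hUmeas)).symm
      _ = ∫⁻ x, ENNReal.ofReal (|g (x.1 • x.2) - g 0| ^ q) ∂((μ.map R).prod (μ.map U)) := by
          rw [hmap]
      _ = ∫⁻ r, ∫⁻ u, ENNReal.ofReal (|g (r • u) - g 0| ^ q) ∂(μ.map U) ∂(μ.map R) :=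
          lintegral_prod _ hφm.aemeasurable
  have haeR : ∀ᵐ r ∂(μ.map R), 0 < r :=
    (MeasureTheory.ae_map_iff hRae (show MeasurableSet {r : ℝ | 0 < r} from measurableSet_Ioi)).mpr
      (Filter.Eventually.of_forall hRpos)
  have hbound : ∫⁻ r, ∫⁻ u, ENNReal.ofReal (|g (r • u) - g 0| ^ q) ∂(μ.map U) ∂(μ.map R) ≤
      ∫⁻ r, ENNReal.ofReal (K * r ^ q) ∂(μ.map R) :=
    lintegral_mono_ae (haeR.mono fun r hr => key r hr)
  have hrhs : ∫⁻ r, ENNReal.ofReal (K * r ^ q) ∂(μ.map R)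
      = ENNReal.ofReal (K * ∫ ω, R ω ^ q ∂μ) := by
    have hm : Measurable fun x : ℝ => ENNReal.ofReal (K * x ^ q) :=
      ENNReal.measurable_ofReal.comp ((measurable_id.pow_const q).const_mul K)
    rw [lintegral_map hm hRmeas,
      ← ofReal_integral_eq_lintegral_ofReal (hR.const_mul K)
        (Filter.Eventually.of_forall fun ω => mul_nonneg hK0 (hRq_nonneg ω)),
      MeasureTheory.integral_const_mul]
  have hnn : 0 ≤ᵐ[μ] fun ω => |g (R ω • U ω) - g 0| ^ q :=
    Filter.Eventually.of_forall fun ω => Real.rpow_nonneg (abs_nonneg _) q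
  have hsm : AEStronglyMeasurable (fun ω => |g (R ω • U ω) - g 0| ^ q) μ :=
    ((hφc.measurable.pow_const q).comp (hRmeas.prodMk hUmeas)).aestronglyMeasurable
  rw [integral_eq_lintegral_of_nonneg_ae hnn hsm]
  have hfinal : ∫⁻ ω, ENNReal.ofReal (|g (R ω • U ω) - g 0| ^ q) ∂μ ≤
      ENNReal.ofReal (K * ∫ ω, R ω ^ q ∂μ) := by
    rw [hI, ← hrhs]; exact hbound
  calc (∫⁻ ω, ENNReal.ofReal (|g (R ω • U ω) - g 0| ^ q) ∂μ).toReal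
      ≤ (ENNReal.ofReal (K * ∫ ω, R ω ^ q ∂μ)).toReal :=
        ENNReal.toReal_mono ENNReal.ofReal_ne_top hfinal
    _ = K * ∫ ω, R ω ^ q ∂μ :=
        ENNReal.toReal_ofReal (mul_nonneg hK0 (integral_nonneg fun ω => hRq_nonneg ω))
end

section
/- Let U be a random vector in ℝ^d and R a strictly positive real random variable independent of U. Let p ≥ 1, q > 0 and C, c₀ > 0 be constants, and assume that for every L > 0, every L-Lipschitz function f : ℝ^d → ℝ (with respect to the Euclidean norm) and every t > 0, P(|f(U) − f(0)| ≥ t) ≤ C · exp(−c₀ d t^p / L^p). Then for every L₀-Lipschitz function g : ℝ^d → ℝ with E[R^{2q}] < ∞, E[R^q · |g(R·U) − g(0)|^q] ≤ (q C Γ(q/p) / (p c₀^{q/p})) · (L₀^q / d^{q/p}) · E[R^{2q}]. -/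
open MeasureTheory
open scoped ENNReal

/-- If `U` satisfies the `p`-exponential concentration property for Lipschitz functions and
`R > 0` is independent of `U`, then for every `L₀`-Lipschitz `g` with `E[R^{2q}] < ∞`,
`E[R^q |g(R·U) − g(0)|^q] ≤ (q C Γ(q/p)/(p c₀^{q/p})) (L₀^q/d^{q/p}) E[R^{2q}]`. -/
theorem stmt_10 {Ω : Type*} [MeasurableSpace Ω] (μ : Measure Ω) [IsProbabilityMeasure μ]
    {d : ℕ} (hd : 0 < d)
    (U : Ω → EuclideanSpace ℝ (Fin d)) (R : Ω → ℝ)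
    (hUmeas : Measurable U) (hRmeas : Measurable R)
    (hRpos : ∀ ω, 0 < R ω) (hindep : ProbabilityTheory.IndepFun R U μ)
    (p q C c₀ : ℝ) (hp : 1 ≤ p) (hq : 0 < q) (hC : 0 < C) (hc₀ : 0 < c₀)
    (hconc : ∀ L : ℝ, 0 < L → ∀ f : EuclideanSpace ℝ (Fin d) → ℝ,
      LipschitzWith (Real.toNNReal L) f → ∀ t : ℝ, 0 < t →
        μ {ω | t ≤ |f (U ω) - f 0|} ≤
          ENNReal.ofReal (C * Real.exp (-(c₀ * d * t ^ p) / L ^ p)))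
    (L₀ : ℝ) (hL₀ : 0 < L₀)
    (g : EuclideanSpace ℝ (Fin d) → ℝ) (hg : LipschitzWith (Real.toNNReal L₀) g)
    (hR : Integrable (fun ω => R ω ^ (2 * q)) μ) :
    ∫ ω, R ω ^ q * |g (R ω • U ω) - g 0| ^ q ∂μ ≤
      (q * C * Real.Gamma (q / p) / (p * c₀ ^ (q / p))) * (L₀ ^ q / (d : ℝ) ^ (q / p)) *
        ∫ ω, R ω ^ (2 * q) ∂μ := by
  have hp0 : (0:ℝ) < p := lt_of_lt_of_le one_pos hp
  have hd0 : (0:ℝ) < d := Nat.cast_pos.mpr hd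
  have hqp : 0 < q / p := div_pos hq hp0
  have hΓ : 0 < Real.Gamma (q / p) := Real.Gamma_pos_of_pos hqp
  set K : ℝ := q * C * Real.Gamma (q / p) / (p * c₀ ^ (q / p)) * (L₀ ^ q / (d : ℝ) ^ (q / p))
    with hK
  have hK0 : 0 ≤ K := by
    rw [hK]; positivity
  haveI : IsProbabilityMeasure (μ.map R) := Measure.isProbabilityMeasure_map hRmeas.aemeasurable
  haveI : IsProbabilityMeasure (μ.map U) := Measure.isProbabilityMeasure_map hUmeas.aemeasurable
  have hgc : Continuous g := hg.continuous
  -- core estimate for fixed r > 0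
  have core : ∀ r : ℝ, 0 < r →
      ∫⁻ u, ENNReal.ofReal (|g (r • u) - g 0| ^ q) ∂(μ.map U) ≤ ENNReal.ofReal (K * r ^ q) := by
    intro r hr
    set f : EuclideanSpace ℝ (Fin d) → ℝ := fun u => g (r • u) with hf
    have hrL : 0 < r * L₀ := mul_pos hr hL₀
    have hflip : LipschitzWith (Real.toNNReal (r * L₀)) f := by
      have h1 : LipschitzWith ‖r‖₊ (fun u : EuclideanSpace ℝ (Fin d) => r • u) :=
        lipschitzWith_smul r
      have h2 := hg.comp h1
      have : Real.toNNReal L₀ * ‖r‖₊ = Real.toNNReal (r * L₀) := by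
        ext
        simp [Real.coe_toNNReal _ hL₀.le, Real.coe_toNNReal _ hrL.le,
          Real.norm_of_nonneg hr.le, mul_comm]
        positivity
      rwa [this] at h2
    have hf0 : f 0 = g 0 := by simp [hf]
    have hfc : Continuous f := hflip.continuous
    set b : ℝ := c₀ * d / (r * L₀) ^ p with hb
    have hbpos : 0 < b := by
      rw [hb]; positivity
    -- tail bound for the law of U
    have tail : ∀ t : ℝ, 0 < t →
        (μ.map U) {u | t ≤ |f u - f 0|} ≤
          ENNReal.ofReal (C * Real.exp (-b * t ^ p)) := by
      intro t ht
      have hset : MeasurableSet {u : EuclideanSpace ℝ (Fin d) | t ≤ |f u - f 0|} := by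
        have : Continuous fun u => |f u - f 0| := (hfc.sub continuous_const).abs
        exact measurableSet_le measurable_const this.measurable
      rw [Measure.map_apply hUmeas hset]
      have := hconc (r * L₀) hrL f hflip t ht
      have heq : -(c₀ * ↑d * t ^ p) / (r * L₀) ^ p = -b * t ^ p := by
        rw [hb]; ring
      rw [heq] at this
      exact this
    -- layer cake
    have hnn : 0 ≤ᵐ[μ.map U] fun u => |f u - f 0| := ae_of_all _ fun u => abs_nonneg _
    have hmble : AEMeasurable (fun u => |f u - f 0|) (μ.map U) :=
      ((hfc.sub continuous_const).abs.measurable).aemeasurable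
    have lc := lintegral_rpow_eq_lintegral_meas_le_mul (μ.map U) hnn hmble hq
    have hf0' : (fun u => ENNReal.ofReal (|g (r • u) - g 0| ^ q)) =
        fun u => ENNReal.ofReal (|f u - f 0| ^ q) := by
      funext u; rw [hf0]
    rw [hf0', lc]
    -- bound the tail integral
    have step1 : ∫⁻ t in Set.Ioi (0:ℝ),
        (μ.map U) {a | t ≤ |f a - f 0|} * ENNReal.ofReal (t ^ (q - 1)) ≤
        ∫⁻ t in Set.Ioi (0:ℝ), ENNReal.ofReal (C * (t ^ (q - 1) * Real.exp (-b * t ^ p))) := by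
      refine lintegral_mono_ae ?_
      filter_upwards [self_mem_ae_restrict (measurableSet_Ioi : MeasurableSet (Set.Ioi (0:ℝ)))]
        with t ht
      have ht0 : 0 < t := ht
      calc (μ.map U) {a | t ≤ |f a - f 0|} * ENNReal.ofReal (t ^ (q - 1))
          ≤ ENNReal.ofReal (C * Real.exp (-b * t ^ p)) * ENNReal.ofReal (t ^ (q - 1)) :=
            mul_le_mul_left (tail t ht0) _
        _ = ENNReal.ofReal (C * (t ^ (q - 1) * Real.exp (-b * t ^ p))) := by
            rw [← ENNReal.ofReal_mul (by positivity)]; ring_nf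
    have hint : IntegrableOn (fun t : ℝ => C * (t ^ (q - 1) * Real.exp (-b * t ^ p)))
        (Set.Ioi 0) := by
      exact (integrableOn_rpow_mul_exp_neg_mul_rpow (by linarith) hp0 hbpos).const_mul C
    have step2 : ∫⁻ t in Set.Ioi (0:ℝ),
        ENNReal.ofReal (C * (t ^ (q - 1) * Real.exp (-b * t ^ p))) =
        ENNReal.ofReal (∫ t in Set.Ioi (0:ℝ), C * (t ^ (q - 1) * Real.exp (-b * t ^ p))) := by
      rw [← ofReal_integral_eq_lintegral_ofReal hint]
      filter_upwards [self_mem_ae_restrict (measurableSet_Ioi : MeasurableSet (Set.Ioi (0:ℝ)))]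
        with t ht
      have ht0 : (0:ℝ) < t := ht
      positivity
    have hval : ∫ t in Set.Ioi (0:ℝ), C * (t ^ (q - 1) * Real.exp (-b * t ^ p)) =
        C * (b ^ (-(q - 1 + 1) / p) * (1 / p) * Real.Gamma ((q - 1 + 1) / p)) := by
      rw [MeasureTheory.integral_const_mul, integral_rpow_mul_exp_neg_mul_rpow hp0
        (by linarith) hbpos]
    have hqq : q - 1 + 1 = q := by ring
    rw [hqq] at hval
    -- compute b ^ (-q/p)
    have hbq : b ^ (-q / p) = r ^ q * L₀ ^ q / (c₀ ^ (q / p) * (d:ℝ) ^ (q / p)) := by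
      have h1 : ((r * L₀) ^ p) ^ (q / p) = r ^ q * L₀ ^ q := by
        rw [← Real.rpow_mul hrL.le, mul_div_cancel₀ _ hp0.ne',
          Real.mul_rpow hr.le hL₀.le]
      have h2 : b ^ (q / p) = c₀ ^ (q / p) * (d:ℝ) ^ (q / p) / (r ^ q * L₀ ^ q) := by
        rw [hb, Real.div_rpow (by positivity) (by positivity),
          Real.mul_rpow hc₀.le hd0.le, h1]
      rw [neg_div, Real.rpow_neg hbpos.le, h2, inv_div]
    have hfin : q * (C * (b ^ (-q / p) * (1 / p) * Real.Gamma (q / p))) = K * r ^ q := by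
      rw [hbq, hK]
      have hc1 : c₀ ^ (q / p) ≠ 0 := by positivity
      have hd1 : (d:ℝ) ^ (q / p) ≠ 0 := by positivity
      field_simp
    calc ENNReal.ofReal q * ∫⁻ t in Set.Ioi (0:ℝ),
          (μ.map U) {a | t ≤ |f a - f 0|} * ENNReal.ofReal (t ^ (q - 1))
        ≤ ENNReal.ofReal q * ENNReal.ofReal
            (∫ t in Set.Ioi (0:ℝ), C * (t ^ (q - 1) * Real.exp (-b * t ^ p))) := by
          rw [← step2]; exact mul_le_mul_right step1 _
      _ = ENNReal.ofReal (K * r ^ q) := by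
          rw [hval, ← ENNReal.ofReal_mul hq.le, hfin]
  -- now the main argument via independence
  set φ : Ω → ℝ := fun ω => R ω ^ q * |g (R ω • U ω) - g 0| ^ q with hφ
  have hrpowq : Measurable fun x : ℝ => x ^ q :=
    (Real.continuous_rpow_const hq.le).measurable
  have hφmeas : Measurable φ := by
    apply Measurable.mul
    · exact hrpowq.comp hRmeas
    · exact hrpowq.comp
        (((hgc.measurable.comp (hRmeas.smul hUmeas)).sub measurable_const).abs)
  have hφnn : 0 ≤ᵐ[μ] φ := ae_of_all _ fun ω => by
    have := (hRpos ω).le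
    positivity
  set F : ℝ × EuclideanSpace ℝ (Fin d) → ℝ≥0∞ :=
    fun x => ENNReal.ofReal (x.1 ^ q * |g (x.1 • x.2) - g 0| ^ q) with hF
  have hFmeas : Measurable F := by
    apply ENNReal.measurable_ofReal.comp
    apply Measurable.mul
    · exact hrpowq.comp measurable_fst
    · exact hrpowq.comp (((hgc.measurable.comp (measurable_fst.smul measurable_snd)).sub
        measurable_const).abs)
  have hpair : Measurable fun ω => (R ω, U ω) := hRmeas.prodMk hUmeas
  have hmap : μ.map (fun ω => (R ω, U ω)) = (μ.map R).prod (μ.map U) :=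
    (ProbabilityTheory.indepFun_iff_map_prod_eq_prod_map_map hRmeas.aemeasurable
      hUmeas.aemeasurable).mp hindep
  have key : ∫⁻ ω, ENNReal.ofReal (φ ω) ∂μ ≤
      ENNReal.ofReal K * ∫⁻ ω, ENNReal.ofReal (R ω ^ (2 * q)) ∂μ := by
    have e1 : ∫⁻ ω, ENNReal.ofReal (φ ω) ∂μ = ∫⁻ x, F x ∂((μ.map R).prod (μ.map U)) := by
      rw [← hmap, lintegral_map hFmeas hpair]
    have e2 : ∫⁻ x, F x ∂((μ.map R).prod (μ.map U)) =
        ∫⁻ r, ∫⁻ u, F (r, u) ∂(μ.map U) ∂(μ.map R) :=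
      lintegral_prod F hFmeas.aemeasurable
    have hae : ∀ᵐ r ∂(μ.map R), 0 < r :=
      (MeasureTheory.ae_map_iff hRmeas.aemeasurable measurableSet_Ioi).mpr (ae_of_all _ hRpos)
    have e3 : ∫⁻ r, ∫⁻ u, F (r, u) ∂(μ.map U) ∂(μ.map R) ≤
        ∫⁻ r, ENNReal.ofReal (K * r ^ (2 * q)) ∂(μ.map R) := by
      refine lintegral_mono_ae ?_
      filter_upwards [hae] with r hr
      have hrq : 0 ≤ r ^ q := Real.rpow_nonneg hr.le q
      calc ∫⁻ u, F (r, u) ∂(μ.map U)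
          = ENNReal.ofReal (r ^ q) * ∫⁻ u, ENNReal.ofReal (|g (r • u) - g 0| ^ q) ∂(μ.map U) := by
            rw [← lintegral_const_mul' _ _ ENNReal.ofReal_ne_top]
            simp_rw [hF, ← ENNReal.ofReal_mul hrq]
        _ ≤ ENNReal.ofReal (r ^ q) * ENNReal.ofReal (K * r ^ q) :=
            mul_le_mul_right (core r hr) _
        _ = ENNReal.ofReal (K * r ^ (2 * q)) := by
            rw [← ENNReal.ofReal_mul hrq]
            congr 1
            rw [show (2:ℝ) * q = q + q by ring, Real.rpow_add hr]
            ring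
    have e4 : ∫⁻ r, ENNReal.ofReal (K * r ^ (2 * q)) ∂(μ.map R) =
        ENNReal.ofReal K * ∫⁻ ω, ENNReal.ofReal (R ω ^ (2 * q)) ∂μ := by
      have : ∀ r : ℝ, ENNReal.ofReal (K * r ^ (2 * q)) =
          ENNReal.ofReal K * ENNReal.ofReal (r ^ (2 * q)) := by
        intro r; rw [← ENNReal.ofReal_mul hK0]
      have hm2 : Measurable fun r : ℝ => ENNReal.ofReal (r ^ (2 * q)) :=
        ENNReal.measurable_ofReal.comp
          (Real.continuous_rpow_const (by positivity : (0:ℝ) ≤ 2 * q)).measurable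
      simp_rw [this]
      rw [lintegral_const_mul' _ _ ENNReal.ofReal_ne_top, lintegral_map hm2 hRmeas]
    calc ∫⁻ ω, ENNReal.ofReal (φ ω) ∂μ
        = ∫⁻ r, ∫⁻ u, F (r, u) ∂(μ.map U) ∂(μ.map R) := by rw [e1, e2]
      _ ≤ ∫⁻ r, ENNReal.ofReal (K * r ^ (2 * q)) ∂(μ.map R) := e3
      _ = ENNReal.ofReal K * ∫⁻ ω, ENNReal.ofReal (R ω ^ (2 * q)) ∂μ := e4
  have hR2nn : 0 ≤ᵐ[μ] fun ω => R ω ^ (2 * q) := ae_of_all _ fun ω =>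
    Real.rpow_nonneg (hRpos ω).le _
  have hR2 : ∫⁻ ω, ENNReal.ofReal (R ω ^ (2 * q)) ∂μ =
      ENNReal.ofReal (∫ ω, R ω ^ (2 * q) ∂μ) :=
    (ofReal_integral_eq_lintegral_ofReal hR hR2nn).symm
  rw [hR2, ← ENNReal.ofReal_mul hK0] at key
  have hInt2 : 0 ≤ ∫ ω, R ω ^ (2 * q) ∂μ := integral_nonneg fun ω =>
    Real.rpow_nonneg (hRpos ω).le _
  have final : ∫ ω, φ ω ∂μ ≤ K * ∫ ω, R ω ^ (2 * q) ∂μ := by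
    rw [integral_eq_lintegral_of_nonneg_ae hφnn hφmeas.aestronglyMeasurable]
    calc (∫⁻ ω, ENNReal.ofReal (φ ω) ∂μ).toReal
        ≤ (ENNReal.ofReal (K * ∫ ω, R ω ^ (2 * q) ∂μ)).toReal :=
          ENNReal.toReal_mono ENNReal.ofReal_ne_top key
      _ = K * ∫ ω, R ω ^ (2 * q) ∂μ := ENNReal.toReal_ofReal (by positivity)
  exact final
end
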